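/- arXiv:1604.05077 — 3 statements merged into one kernel-verified Lean document; each statement's English description precedes it below -/
import Mathlib

section
/- For all real x, y with x, y > 0 and all real p, q ≥ 0, the (p,q)-extended Beta function satisfies B(x,y;p,q) ≤ exp(-(√p + √q)²) · B(x,y), where B(x,y) is the classical Euler Beta function. -/
open Real MeasureTheory

/-- The (p,q)-extended Beta function. -/
noncomputable def pqBeta (x y p q : ℝ) : ℝ :=
  ∫ t in (0:ℝ)..1, t ^ (x - 1) * (1 - t) ^ (y - 1) * Real.exp (-p / t - q / (1 - t))

/-- The classical Euler Beta function as an integral. -/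
noncomputable def eulerBeta (x y : ℝ) : ℝ :=
  ∫ t in (0:ℝ)..1, t ^ (x - 1) * (1 - t) ^ (y - 1)

lemma key_ineq (p q t : ℝ) (hp : 0 ≤ p) (hq : 0 ≤ q) (ht : 0 < t) (ht1 : t < 1) :
    (Real.sqrt p + Real.sqrt q) ^ 2 ≤ p / t + q / (1 - t) := by
  have h1t : 0 < 1 - t := by linarith
  set a := p * (1 - t) / t with ha_def
  set b := q * t / (1 - t) with hb_def
  have ha : 0 ≤ a := by positivity
  have hb : 0 ≤ b := by positivity
  have hab : a * b = p * q := by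
    rw [ha_def, hb_def, div_mul_div_comm, div_eq_iff (mul_pos ht h1t).ne']
    ring
  have hs : Real.sqrt (p * q) = Real.sqrt a * Real.sqrt b := by
    rw [← Real.sqrt_mul ha, hab]
  have h2 : 2 * Real.sqrt (p * q) ≤ a + b := by
    nlinarith [sq_nonneg (Real.sqrt a - Real.sqrt b), Real.sq_sqrt ha, Real.sq_sqrt hb]
  have e1 : p / t = p + a := by
    rw [ha_def, div_eq_iff ht.ne', add_mul, div_mul_cancel₀ _ ht.ne']
    ring
  have e2 : q / (1 - t) = q + b := by
    rw [hb_def, div_eq_iff h1t.ne', add_mul, div_mul_cancel₀ _ h1t.ne']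
    ring
  have hpq : Real.sqrt (p * q) = Real.sqrt p * Real.sqrt q := Real.sqrt_mul hp q
  nlinarith [Real.sq_sqrt hp, Real.sq_sqrt hq]

theorem pqBeta_le (x y p q : ℝ) (hx : 0 < x) (hy : 0 < y) (hp : 0 ≤ p) (hq : 0 ≤ q) :
    pqBeta x y p q ≤ Real.exp (-(Real.sqrt p + Real.sqrt q) ^ 2) * eulerBeta x y := by
  set c := Real.exp (-(Real.sqrt p + Real.sqrt q) ^ 2) with hc
  set f : ℝ → ℝ := fun t => t ^ (x - 1) * (1 - t) ^ (y - 1) with hf_def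
  set g : ℝ → ℝ := fun t => t ^ (x - 1) * (1 - t) ^ (y - 1) * Real.exp (-p / t - q / (1 - t))
    with hg_def
  have hf : IntegrableOn f (Set.Ioc 0 1) volume := by
    have h := Complex.betaIntegral_convergent (u := (x : ℂ)) (v := (y : ℂ))
      (by simpa using hx) (by simpa using hy)
    rw [intervalIntegrable_iff_integrableOn_Ioc_of_le zero_le_one] at h
    have h2 : IntegrableOn (fun t : ℝ => RCLike.re ((t:ℂ) ^ ((x:ℂ) - 1) * (1 - (t:ℂ)) ^ ((y:ℂ) - 1))) (Set.Ioc 0 1) volume := h.re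
    refine IntegrableOn.congr_fun h2 (fun t ht => ?_) measurableSet_Ioc
    obtain ⟨ht0, ht1⟩ := ht
    have e1 : (t : ℂ) ^ ((x : ℂ) - 1) = ((t ^ (x - 1) : ℝ) : ℂ) := by
      rw [Complex.ofReal_cpow ht0.le]
      push_cast
      ring_nf
    have e2 : ((1 : ℂ) - t) ^ ((y : ℂ) - 1) = (((1 - t) ^ (y - 1) : ℝ) : ℂ) := by
      rw [show ((1 : ℂ) - t) = (((1 - t : ℝ)) : ℂ) by push_cast; ring,
        Complex.ofReal_cpow (by linarith)]
      push_cast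
      ring_nf
    simp only [e1, e2, ← Complex.ofReal_mul, RCLike.re_to_complex, Complex.ofReal_re, hf_def]
  have hfnn : ∀ t ∈ Set.Ioc (0:ℝ) 1, 0 ≤ f t := by
    intro t ht
    have := ht.1
    have : (0:ℝ) ≤ 1 - t := by linarith [ht.2]
    positivity
  have hgm : Measurable g := by
    exact ((measurable_id.pow_const (x - 1)).mul
        ((measurable_const.sub measurable_id).pow_const (y - 1))).mul
      (((measurable_const.div measurable_id).sub
        (measurable_const.div (measurable_const.sub measurable_id))).exp)
  have hgle : ∀ t ∈ Set.Ioo (0:ℝ) 1, g t ≤ c * f t := by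
    intro t ht
    obtain ⟨ht0, ht1⟩ := ht
    have hle : Real.exp (-p / t - q / (1 - t)) ≤ c := by
      rw [hc]
      apply Real.exp_le_exp.2
      have := key_ineq p q t hp hq ht0 ht1
      rw [neg_div]
      linarith
    have hfnn' : 0 ≤ f t := hfnn t ⟨ht0, ht1.le⟩
    calc g t = f t * Real.exp (-p / t - q / (1 - t)) := rfl
      _ ≤ f t * c := by exact mul_le_mul_of_nonneg_left hle hfnn'
      _ = c * f t := mul_comm _ _
  have hg : IntegrableOn g (Set.Ioc 0 1) volume := by
    refine Integrable.mono' hf hgm.aestronglyMeasurable.restrict ?_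
    refine (ae_restrict_iff' measurableSet_Ioc).2 (Filter.Eventually.of_forall fun t ht => ?_)
    obtain ⟨ht0, ht1⟩ := ht
    have hfnn' : 0 ≤ f t := hfnn t ⟨ht0, ht1⟩
    have hexp : Real.exp (-p / t - q / (1 - t)) ≤ 1 := by
      apply Real.exp_le_one_iff.2
      have h1 : 0 ≤ p / t := by positivity
      have h2 : 0 ≤ q / (1 - t) := by
        have : (0:ℝ) ≤ 1 - t := by linarith
        positivity
      rw [neg_div]
      linarith
    have hgnn : 0 ≤ g t := by
      have := Real.exp_nonneg (-p / t - q / (1 - t))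
      exact mul_nonneg hfnn' this
    rw [Real.norm_of_nonneg hgnn]
    calc g t = f t * Real.exp (-p / t - q / (1 - t)) := rfl
      _ ≤ f t * 1 := mul_le_mul_of_nonneg_left hexp hfnn'
      _ = f t := mul_one _
  have : pqBeta x y p q = ∫ t in Set.Ioo (0:ℝ) 1, g t := by
    rw [pqBeta, intervalIntegral.integral_of_le zero_le_one, integral_Ioc_eq_integral_Ioo]
  rw [this]
  have hER : c * eulerBeta x y = ∫ t in Set.Ioo (0:ℝ) 1, c * f t := by
    rw [eulerBeta, intervalIntegral.integral_of_le zero_le_one, integral_Ioc_eq_integral_Ioo,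
      integral_const_mul]
  rw [hER]
  exact setIntegral_mono_on (hg.mono_set Set.Ioo_subset_Ioc_self)
    ((hf.mono_set Set.Ioo_subset_Ioc_self).const_mul c) measurableSet_Ioo hgle
end

section
/- For c > b > 0, p, q ≥ 0, and any real z, the (p,q)-extended Kummer confluent hypergeometric function satisfies |Φ_{p,q}(b; c; z)| ≤ exp(-(√p + √q)²) · Φ(b; c; |z|), where Φ = ₁F₁ is the classical confluent hypergeometric function. -/
open Real MeasureTheory

/-- The (p,q)-extended Kummer confluent hypergeometric function. -/
noncomputable def pqKummer (b c z p q : ℝ) : ℝ :=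
  ∑' n : ℕ, (pqBeta (b + n) (c - b) p q / pqBeta b (c - b) 0 0) * z ^ n / n.factorial

/-- The classical confluent hypergeometric function ₁F₁. -/
noncomputable def oneF1 (b c z : ℝ) : ℝ :=
  ∑' n : ℕ, (ascPochhammer ℝ n).eval b / (ascPochhammer ℝ n).eval c * z ^ n / n.factorial

lemma complex_integrand_eq {x y t : ℝ} (ht0 : 0 ≤ t) (ht1 : t ≤ 1) :
    (t : ℂ) ^ ((x : ℂ) - 1) * ((1 : ℂ) - t) ^ ((y : ℂ) - 1)
      = ((t ^ (x - 1) * (1 - t) ^ (y - 1) : ℝ) : ℂ) := by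
  rw [Complex.ofReal_mul, Complex.ofReal_cpow ht0,
    Complex.ofReal_cpow (by linarith : (0:ℝ) ≤ 1 - t)]
  push_cast
  ring

lemma pqBeta_zero_zero (x y : ℝ) :
    pqBeta x y 0 0 = ∫ t in (0:ℝ)..1, t ^ (x - 1) * (1 - t) ^ (y - 1) := by
  simp [pqBeta]

lemma betaIntegrand_intervalIntegrable {x y : ℝ} (hx : 0 < x) (hy : 0 < y) :
    IntervalIntegrable (fun t : ℝ => t ^ (x - 1) * (1 - t) ^ (y - 1)) volume 0 1 := by
  have h := Complex.betaIntegral_convergent (u := (x : ℂ)) (v := (y : ℂ))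
    (by simpa using hx) (by simpa using hy)
  rw [intervalIntegrable_iff_integrableOn_Ioc_of_le zero_le_one] at h ⊢
  have h2 : IntegrableOn (fun t : ℝ => Complex.re ((t : ℂ) ^ ((x : ℂ) - 1)
      * ((1 : ℂ) - t) ^ ((y : ℂ) - 1))) (Set.Ioc 0 1) volume := h.re
  refine h2.congr_fun (fun t ht => ?_) measurableSet_Ioc
  simp only [complex_integrand_eq ht.1.le ht.2, Complex.ofReal_re]

lemma pqBeta_zero_eq_Gamma {x y : ℝ} (hx : 0 < x) (hy : 0 < y) :
    pqBeta x y 0 0 = Real.Gamma x * Real.Gamma y / Real.Gamma (x + y) := by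
  have hb := Complex.Gamma_mul_Gamma_eq_betaIntegral (s := (x : ℂ)) (t := (y : ℂ))
    (by simpa using hx) (by simpa using hy)
  have key : Complex.betaIntegral x y = ((pqBeta x y 0 0 : ℝ) : ℂ) := by
    rw [pqBeta_zero_zero, Complex.betaIntegral, ← intervalIntegral.integral_ofReal]
    refine intervalIntegral.integral_congr fun t ht => ?_
    rw [Set.uIcc_of_le zero_le_one] at ht
    exact complex_integrand_eq ht.1 ht.2
  rw [key, ← Complex.ofReal_add, Complex.Gamma_ofReal, Complex.Gamma_ofReal,
    Complex.Gamma_ofReal] at hb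
  have h0 : Real.Gamma (x + y) ≠ 0 := (Real.Gamma_pos_of_pos (by linarith)).ne'
  have hr : Real.Gamma x * Real.Gamma y = Real.Gamma (x + y) * pqBeta x y 0 0 := by
    exact_mod_cast hb
  rw [eq_div_iff h0]
  linear_combination -hr

lemma pqBeta_zero_pos {x y : ℝ} (hx : 0 < x) (hy : 0 < y) : 0 < pqBeta x y 0 0 := by
  rw [pqBeta_zero_eq_Gamma hx hy]
  have := Real.Gamma_pos_of_pos hx
  have := Real.Gamma_pos_of_pos hy
  have := Real.Gamma_pos_of_pos (by linarith : 0 < x + y)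
  positivity

lemma Gamma_add_nat' {x : ℝ} (hx : 0 < x) (n : ℕ) :
    Real.Gamma (x + n) = (ascPochhammer ℝ n).eval x * Real.Gamma x := by
  induction n with
  | zero => simp
  | succ n ih =>
    have hxn : 0 < x + n := by positivity
    have h1 : x + ((n + 1 : ℕ) : ℝ) = (x + n) + 1 := by push_cast; ring
    rw [h1, Real.Gamma_add_one hxn.ne', ih, ascPochhammer_succ_eval]
    ring

lemma pqBeta_ratio {b c : ℝ} (hb : 0 < b) (hcb : b < c) (n : ℕ) :
    pqBeta (b + n) (c - b) 0 0 / pqBeta b (c - b) 0 0 =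
      (ascPochhammer ℝ n).eval b / (ascPochhammer ℝ n).eval c := by
  have hc : 0 < c := hb.trans hcb
  have hcb' : 0 < c - b := by linarith
  have hbn : 0 < b + n := by positivity
  rw [pqBeta_zero_eq_Gamma hbn hcb', pqBeta_zero_eq_Gamma hb hcb',
    show b + (n : ℝ) + (c - b) = c + n by ring, show b + (c - b) = c by ring,
    Gamma_add_nat' hb n, Gamma_add_nat' hc n]
  have g1 := (Real.Gamma_pos_of_pos hb).ne'
  have g2 := (Real.Gamma_pos_of_pos hc).ne'
  have g3 := (Real.Gamma_pos_of_pos hcb').ne'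
  have p1 := (ascPochhammer_pos n b hb).ne'
  have p2 := (ascPochhammer_pos n c hc).ne'
  field_simp

lemma pqBeta_abs_le {x y : ℝ} (hx : 0 < x) (hy : 0 < y) {p q : ℝ} (hp : 0 ≤ p) (hq : 0 ≤ q) :
    |pqBeta x y p q| ≤ Real.exp (-(Real.sqrt p + Real.sqrt q) ^ 2) * pqBeta x y 0 0 := by
  set E := Real.exp (-(Real.sqrt p + Real.sqrt q) ^ 2) with hE
  have hint : IntervalIntegrable (fun t : ℝ => E * (t ^ (x - 1) * (1 - t) ^ (y - 1))) volume 0 1 :=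
    (betaIntegrand_intervalIntegrable hx hy).const_mul E
  have hae : ∀ᵐ t ∂volume.restrict (Set.uIoc (0:ℝ) 1),
      ‖t ^ (x - 1) * (1 - t) ^ (y - 1) * Real.exp (-p / t - q / (1 - t))‖
        ≤ E * (t ^ (x - 1) * (1 - t) ^ (y - 1)) := by
    rw [Set.uIoc_of_le zero_le_one,
      ← Measure.restrict_congr_set MeasureTheory.Ioo_ae_eq_Ioc]
    filter_upwards [MeasureTheory.ae_restrict_mem measurableSet_Ioo] with t ht
    obtain ⟨ht0, ht1⟩ := ht
    have h1t : 0 < 1 - t := by linarith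
    have hg : 0 ≤ t ^ (x - 1) * (1 - t) ^ (y - 1) := by positivity
    have key : (Real.sqrt p + Real.sqrt q) ^ 2 ≤ p / t + q / (1 - t) := by
      rw [div_add_div _ _ ht0.ne' h1t.ne', le_div_iff₀ (by positivity)]
      nlinarith [sq_nonneg (Real.sqrt p * (1 - t) - Real.sqrt q * t),
        Real.sq_sqrt hp, Real.sq_sqrt hq, Real.sqrt_nonneg p, Real.sqrt_nonneg q,
        mul_pos ht0 h1t]
    have hexp : Real.exp (-p / t - q / (1 - t)) ≤ E := by
      rw [hE]
      apply Real.exp_le_exp.2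
      rw [neg_div]
      linarith
    rw [Real.norm_eq_abs, abs_mul, abs_of_nonneg hg, abs_of_nonneg (Real.exp_pos _).le,
      mul_comm E]
    exact mul_le_mul_of_nonneg_left hexp hg
  have h := intervalIntegral.norm_integral_le_abs_of_norm_le hae hint
  rw [intervalIntegral.integral_const_mul, ← pqBeta_zero_zero] at h
  have hnn : (0:ℝ) ≤ E * pqBeta x y 0 0 :=
    mul_nonneg (Real.exp_pos _).le (pqBeta_zero_pos hx hy).le
  rw [abs_of_nonneg hnn] at h
  simpa [Real.norm_eq_abs, pqBeta] using h

theorem pqKummer_abs_le (b c z p q : ℝ) (hb : 0 < b) (hcb : b < c)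
    (hp : 0 ≤ p) (hq : 0 ≤ q) :
    |pqKummer b c z p q| ≤
      Real.exp (-(Real.sqrt p + Real.sqrt q) ^ 2) * oneF1 b c |z| := by
  have hc : 0 < c := hb.trans hcb
  have hcb' : 0 < c - b := by linarith
  set E := Real.exp (-(Real.sqrt p + Real.sqrt q) ^ 2) with hE
  have hEpos : 0 < E := Real.exp_pos _
  have hBpos : 0 < pqBeta b (c - b) 0 0 := pqBeta_zero_pos hb hcb'
  set C : ℕ → ℝ := fun n =>
    (ascPochhammer ℝ n).eval b / (ascPochhammer ℝ n).eval c * |z| ^ n / n.factorial with hC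
  have hCnonneg : ∀ n, 0 ≤ C n := by
    intro n
    have h1 := ascPochhammer_pos n b hb
    have h2 := ascPochhammer_pos n c hc
    have h3 : (0:ℝ) < n.factorial := by exact_mod_cast n.factorial_pos
    positivity
  have hCle : ∀ n, C n ≤ |z| ^ n / n.factorial := by
    intro n
    have hle : (ascPochhammer ℝ n).eval b ≤ (ascPochhammer ℝ n).eval c := by
      induction n with
      | zero => simp
      | succ n ih =>
        rw [ascPochhammer_succ_eval, ascPochhammer_succ_eval]
        have pb := ascPochhammer_pos n b hb
        have pc := ascPochhammer_pos n c hc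
        have : b + n ≤ c + n := by linarith
        exact mul_le_mul ih this (by positivity) pc.le
    have hr : (ascPochhammer ℝ n).eval b / (ascPochhammer ℝ n).eval c ≤ 1 :=
      (div_le_one (ascPochhammer_pos n c hc)).2 hle
    have h3 : (0:ℝ) < n.factorial := by exact_mod_cast n.factorial_pos
    show (ascPochhammer ℝ n).eval b / (ascPochhammer ℝ n).eval c * |z| ^ n / n.factorial
        ≤ |z| ^ n / n.factorial
    have hm := mul_le_mul_of_nonneg_right hr (pow_nonneg (abs_nonneg z) n)
    rw [one_mul] at hm
    exact (div_le_div_iff_of_pos_right h3).2 hm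
  have hCsum : Summable C :=
    Summable.of_nonneg_of_le hCnonneg hCle (Real.summable_pow_div_factorial |z|)
  set A : ℕ → ℝ := fun n =>
    pqBeta (b + n) (c - b) p q / pqBeta b (c - b) 0 0 * z ^ n / n.factorial with hA
  have hAle : ∀ n, |A n| ≤ E * C n := by
    intro n
    have hbn : 0 < b + (n : ℝ) := by positivity
    have h1 := pqBeta_abs_le hbn hcb' hp hq
    have h2 := pqBeta_ratio hb hcb n
    have h3 : (0:ℝ) < n.factorial := by exact_mod_cast n.factorial_pos
    have habs : |A n| = |pqBeta (b + n) (c - b) p q| / pqBeta b (c - b) 0 0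
        * |z| ^ n / n.factorial := by
      rw [hA]
      simp only [abs_div, abs_mul, abs_pow, abs_of_pos hBpos, abs_of_pos h3,
        Nat.abs_cast]
    rw [habs]
    calc |pqBeta (b + n) (c - b) p q| / pqBeta b (c - b) 0 0 * |z| ^ n / n.factorial
        ≤ E * pqBeta (b + n) (c - b) 0 0 / pqBeta b (c - b) 0 0 * |z| ^ n / n.factorial := by
          have s1 : |pqBeta (b + n) (c - b) p q| / pqBeta b (c - b) 0 0
              ≤ E * pqBeta (b + n) (c - b) 0 0 / pqBeta b (c - b) 0 0 :=
            (div_le_div_iff_of_pos_right hBpos).2 h1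
          have s2 := mul_le_mul_of_nonneg_right s1 (pow_nonneg (abs_nonneg z) n)
          exact (div_le_div_iff_of_pos_right h3).2 s2
      _ = E * C n := by
          rw [hC, mul_div_assoc E, h2]
          ring
  have hAabsSum : Summable fun n => |A n| :=
    Summable.of_nonneg_of_le (fun n => abs_nonneg _) hAle (hCsum.mul_left E)
  have hAsum : Summable A := by
    refine Summable.of_norm ?_
    simpa [Real.norm_eq_abs] using hAabsSum
  calc |pqKummer b c z p q| = ‖∑' n, A n‖ := by rw [Real.norm_eq_abs]; rfl
    _ ≤ ∑' n, ‖A n‖ := norm_tsum_le_tsum_norm (by simpa [Real.norm_eq_abs] using hAabsSum)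
    _ = ∑' n, |A n| := by simp [Real.norm_eq_abs]
    _ ≤ ∑' n, E * C n := Summable.tsum_le_tsum hAle hAabsSum (hCsum.mul_left E)
    _ = E * ∑' n, C n := tsum_mul_left
    _ = E * oneF1 b c |z| := rfl
end

section
/- Laplace transform representation: For λ > 0, c > b > 0, p, q ≥ 0, z > 0, and real ω with |ω/z| < 1, one has F_{p,q}(λ, b; c; ω/z) = (z^λ / Γ(λ)) ∫₀^∞ exp(-z t) t^(λ-1) Φ_{p,q}(b; c; ω t) dt. -/
open Real Set MeasureTheory

/-- The (p,q)-extended Gauss hypergeometric function, series definition. -/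
noncomputable def pqGauss (a b c z p q : ℝ) : ℝ :=
  ∑' n : ℕ, (ascPochhammer ℝ n).eval a *
    (pqBeta (b + n) (c - b) p q / pqBeta b (c - b) 0 0) * z ^ n / n.factorial

/- ## Auxiliary lemmas -/

lemma betaIntegrable_left {u : ℝ} (hu : 0 < u) (v : ℝ) :
    IntervalIntegrable (fun x => x ^ (u - 1) * (1 - x) ^ (v - 1)) volume 0 (1/2) := by
  apply IntervalIntegrable.mul_continuousOn
  · exact intervalIntegral.intervalIntegrable_rpow' (by linarith)
  · apply ContinuousOn.rpow_const
    · exact (continuous_const.sub continuous_id).continuousOn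
    · intro x hx
      rw [uIcc_of_le (by norm_num : (0:ℝ) ≤ 1/2)] at hx
      exact Or.inl (by simp only [mem_Icc] at hx; intro h; rw [sub_eq_zero] at h; linarith [hx.2])

lemma betaIntegrable {u v : ℝ} (hu : 0 < u) (hv : 0 < v) :
    IntervalIntegrable (fun x => x ^ (u - 1) * (1 - x) ^ (v - 1)) volume 0 1 := by
  refine (betaIntegrable_left hu v).trans ?_
  rw [IntervalIntegrable.iff_comp_neg]
  convert ((betaIntegrable_left hv u).comp_add_right 1).symm using 1
  · ext1 x
    conv_lhs => rw [mul_comm]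
    congr 2 <;> ring
  · norm_num
  · norm_num

lemma pqBeta_integrand_integrable {x y : ℝ} (hx : 0 < x) (hy : 0 < y) {p q : ℝ}
    (hp : 0 ≤ p) (hq : 0 ≤ q) :
    IntervalIntegrable
      (fun t => t ^ (x - 1) * (1 - t) ^ (y - 1) * Real.exp (-p / t - q / (1 - t)))
      volume 0 1 := by
  apply (betaIntegrable hx hy).mono_fun
  · apply Measurable.aestronglyMeasurable
    fun_prop
  · rw [uIoc_of_le (by norm_num : (0:ℝ) ≤ 1)]
    apply ae_restrict_of_forall_mem measurableSet_Ioc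
    intro t ht
    simp only [Real.norm_eq_abs, abs_mul]
    have h1 : |Real.exp (-p / t - q / (1 - t))| ≤ 1 := by
      rw [abs_of_pos (Real.exp_pos _), Real.exp_le_one_iff]
      have : 0 ≤ p / t := div_nonneg hp ht.1.le
      have : 0 ≤ q / (1 - t) := div_nonneg hq (by linarith [ht.2])
      simp only [neg_div]
      linarith
    calc |t ^ (x - 1)| * |(1 - t) ^ (y - 1)| * |Real.exp (-p / t - q / (1 - t))|
        ≤ |t ^ (x - 1)| * |(1 - t) ^ (y - 1)| * 1 := by
          apply mul_le_mul_of_nonneg_left h1 (by positivity)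
      _ = |t ^ (x - 1)| * |(1 - t) ^ (y - 1)| := mul_one _

lemma pqBeta_nonneg (x y p q : ℝ) : 0 ≤ pqBeta x y p q := by
  apply intervalIntegral.integral_nonneg zero_le_one
  intro t ht
  have h1 : (0:ℝ) ≤ t := ht.1
  have h2 : (0:ℝ) ≤ 1 - t := by linarith [ht.2]
  positivity

lemma pqBeta_le_s12 {b c p q : ℝ} (hb : 0 < b) (hcb : b < c) (hp : 0 ≤ p) (hq : 0 ≤ q) (n : ℕ) :
    pqBeta (b + n) (c - b) p q ≤ pqBeta b (c - b) 0 0 := by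
  unfold pqBeta
  rw [intervalIntegral.integral_of_le zero_le_one, intervalIntegral.integral_of_le zero_le_one]
  apply setIntegral_mono_on
  · rw [← intervalIntegrable_iff_integrableOn_Ioc_of_le zero_le_one]
    exact pqBeta_integrand_integrable (by positivity) (by linarith) hp hq
  · rw [← intervalIntegrable_iff_integrableOn_Ioc_of_le zero_le_one]
    exact pqBeta_integrand_integrable hb (by linarith) le_rfl le_rfl
  · exact measurableSet_Ioc
  · intro t ht
    have ht0 : 0 < t := ht.1
    have ht1 : t ≤ 1 := ht.2
    have h1 : t ^ (b + n - 1) ≤ t ^ (b - 1) :=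
      Real.rpow_le_rpow_of_exponent_ge ht0 ht1 (by
        have : (0:ℝ) ≤ n := Nat.cast_nonneg n
        linarith)
    have h2 : Real.exp (-p / t - q / (1 - t)) ≤ 1 := by
      rw [Real.exp_le_one_iff]
      have : 0 ≤ p / t := div_nonneg hp ht0.le
      have : 0 ≤ q / (1 - t) := div_nonneg hq (by linarith)
      simp only [neg_div]
      linarith
    have h3 : (0:ℝ) ≤ (1 - t) ^ (c - b - 1) := Real.rpow_nonneg (by linarith) _
    have h4 : (0:ℝ) ≤ t ^ (b - 1) := Real.rpow_nonneg ht0.le _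
    have h5 : (0:ℝ) ≤ t ^ (b + n - 1) := Real.rpow_nonneg ht0.le _
    calc t ^ (b + (n:ℝ) - 1) * (1 - t) ^ (c - b - 1) * Real.exp (-p / t - q / (1 - t))
        ≤ t ^ (b - 1) * (1 - t) ^ (c - b - 1) * 1 := by
          apply mul_le_mul _ h2 (Real.exp_pos _).le (by positivity)
          exact mul_le_mul_of_nonneg_right h1 h3
      _ = t ^ (b - 1) * (1 - t) ^ (c - b - 1) * Real.exp (-0 / t - 0 / (1 - t)) := by
          norm_num

lemma pqBeta_pos {b c : ℝ} (hb : 0 < b) (hcb : b < c) :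
    0 < pqBeta b (c - b) 0 0 := by
  unfold pqBeta
  rw [intervalIntegral.integral_of_le zero_le_one]
  rw [setIntegral_pos_iff_support_of_nonneg_ae]
  · apply lt_of_lt_of_le _ (measure_mono (show Ioo (0:ℝ) 1 ⊆ _ from ?_))
    · rw [Real.volume_Ioo]
      norm_num
    · intro t ht
      constructor
      · have ht0 : (0:ℝ) < t := ht.1
        have ht1 : (0:ℝ) < 1 - t := by linarith [ht.2]
        simp only [Function.mem_support]
        positivity
      · exact ⟨ht.1, ht.2.le⟩
  · apply ae_restrict_of_forall_mem measurableSet_Ioc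
    intro t ht
    have h1 : (0:ℝ) ≤ t := ht.1.le
    have h2 : (0:ℝ) ≤ 1 - t := by linarith [ht.2]
    positivity
  · rw [← intervalIntegrable_iff_integrableOn_Ioc_of_le zero_le_one]
    exact pqBeta_integrand_integrable hb (by linarith) le_rfl le_rfl

open Filter Topology in
lemma poch_summable (lam : ℝ) (hlam : 0 < lam) {r : ℝ} (hr0 : 0 ≤ r) (hr : r < 1) :
    Summable fun n : ℕ => (ascPochhammer ℝ n).eval lam * r ^ n / n.factorial := by
  rcases eq_or_lt_of_le hr0 with h0 | h0
  · apply summable_of_ne_finset_zero (s := {0})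
    intro n hn
    simp only [Finset.mem_singleton] at hn
    rw [← h0, zero_pow hn]
    simp
  · apply summable_of_ratio_test_tendsto_lt_one hr
    · filter_upwards with n
      have h1 : 0 < (ascPochhammer ℝ n).eval lam := ascPochhammer_pos n lam hlam
      have h2 : (0:ℝ) < r ^ n := by positivity
      have h3 : (0:ℝ) < (n.factorial : ℝ) := by positivity
      positivity
    · have key : ∀ n : ℕ,
          ‖(ascPochhammer ℝ (n+1)).eval lam * r ^ (n+1) / (n+1).factorial‖ /
            ‖(ascPochhammer ℝ n).eval lam * r ^ n / n.factorial‖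
          = r * ((lam + n) / (n + 1)) := by
        intro n
        have h1 : 0 < (ascPochhammer ℝ n).eval lam := ascPochhammer_pos n lam hlam
        have h1' : 0 < (ascPochhammer ℝ (n+1)).eval lam := ascPochhammer_pos (n+1) lam hlam
        have h2 : (0:ℝ) < r ^ n := by positivity
        have h3 : (0:ℝ) < (n.factorial : ℝ) := by positivity
        have h3' : (0:ℝ) < ((n+1).factorial : ℝ) := by positivity
        rw [Real.norm_eq_abs, Real.norm_eq_abs, abs_of_pos (by positivity),
          abs_of_pos (by positivity)]
        rw [ascPochhammer_succ_right, Polynomial.eval_mul, Polynomial.eval_add,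
          Polynomial.eval_X, Polynomial.eval_natCast, Nat.factorial_succ, pow_succ]
        push_cast
        field_simp
      rw [show (𝓝 r) = 𝓝 (r * 1) by rw [mul_one]]
      simp only [key]
      apply Tendsto.const_mul
      have h4 : ∀ n : ℕ, (lam + (n:ℝ)) / ((n:ℝ) + 1) = (lam - 1) / ((n:ℝ) + 1) + 1 := by
        intro n
        have : ((n:ℝ) + 1) ≠ 0 := by positivity
        field_simp
        ring
      simp only [h4]
      rw [show (𝓝 (1:ℝ)) = 𝓝 (0 + 1) by rw [zero_add]]
      apply Tendsto.add _ tendsto_const_nhds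
      have h5 : Filter.Tendsto (fun n : ℕ => (n:ℝ) + 1) Filter.atTop Filter.atTop :=
        Filter.tendsto_atTop_add_const_right _ 1 tendsto_natCast_atTop_atTop
      exact Filter.Tendsto.div_atTop tendsto_const_nhds h5

lemma Gamma_lam_add (lam : ℝ) (hlam : 0 < lam) (n : ℕ) :
    Real.Gamma (lam + n) = (ascPochhammer ℝ n).eval lam * Real.Gamma lam := by
  induction n with
  | zero => simp [ascPochhammer_zero]
  | succ n ih =>
    have h : lam + ((n:ℕ)+1 : ℕ) = (lam + n) + 1 := by push_cast; ring
    have hpos : (0:ℝ) < lam + n := by positivity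
    rw [h, Real.Gamma_add_one hpos.ne', ih, ascPochhammer_succ_right, Polynomial.eval_mul,
      Polynomial.eval_add, Polynomial.eval_X, Polynomial.eval_natCast]
    ring

theorem pqGauss_laplace (lam b c p q z ω : ℝ) (hlam : 0 < lam) (hb : 0 < b)
    (hcb : b < c) (hp : 0 ≤ p) (hq : 0 ≤ q) (hz : 0 < z) (hωz : |ω / z| < 1) :
    pqGauss lam b c (ω / z) p q =
      z ^ lam / Real.Gamma lam *
        ∫ t in Set.Ioi (0:ℝ),
          Real.exp (-z * t) * t ^ (lam - 1) * pqKummer b c (ω * t) p q := by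
  have hD : 0 < pqBeta b (c - b) 0 0 := pqBeta_pos hb hcb
  set B : ℕ → ℝ := fun n => pqBeta (b + n) (c - b) p q / pqBeta b (c - b) 0 0 with hB
  have hB0 : ∀ n, 0 ≤ B n := fun n => div_nonneg (pqBeta_nonneg _ _ _ _) hD.le
  have hB1 : ∀ n, B n ≤ 1 := fun n =>
    (div_le_one hD).mpr (pqBeta_le_s12 hb hcb hp hq n)
  have hr : |ω| / z < 1 := by rwa [abs_div, abs_of_pos hz] at hωz
  set F : ℕ → ℝ → ℝ := fun n t =>
    Real.exp (-z * t) * t ^ (lam - 1) * (B n * (ω * t) ^ n / n.factorial) with hF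
  -- the pure Gamma-type integral
  have hsplit : ∀ (n : ℕ) {t : ℝ}, 0 < t → t ^ (lam + (n:ℝ) - 1) = t ^ (lam - 1) * t ^ n := by
    intro n t ht
    rw [show lam + (n:ℝ) - 1 = (lam - 1) + (n:ℝ) by ring, Real.rpow_add ht, Real.rpow_natCast]
  have hG : ∀ n : ℕ, IntegrableOn
      (fun t : ℝ => t ^ (lam + (n:ℝ) - 1) * Real.exp (-(z * t))) (Ioi 0) := by
    intro n
    have h := integrableOn_rpow_mul_exp_neg_mul_rpow
      (s := lam + (n:ℝ) - 1) (p := 1) (b := z)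
      (by have : (0:ℝ) ≤ n := Nat.cast_nonneg n; linarith) zero_lt_one hz
    simpa [Real.rpow_one, neg_mul] using h
  have hGval : ∀ n : ℕ,
      ∫ t in Ioi (0:ℝ), t ^ (lam + (n:ℝ) - 1) * Real.exp (-(z * t))
        = (1 / z) ^ (lam + (n:ℝ)) * Real.Gamma (lam + (n:ℝ)) := by
    intro n
    exact Real.integral_rpow_mul_exp_neg_mul_Ioi
      (by have : (0:ℝ) ≤ n := Nat.cast_nonneg n; linarith) hz
  have hFeq : ∀ n : ℕ, EqOn
      (fun t : ℝ => (B n * ω ^ n / n.factorial) *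
        (t ^ (lam + (n:ℝ) - 1) * Real.exp (-(z * t)))) (F n) (Ioi 0) := by
    intro n t ht
    have ht : (0:ℝ) < t := ht
    simp only [hF, hsplit n ht, mul_pow, neg_mul]
    ring
  have hFint : ∀ n : ℕ, Integrable (F n) (volume.restrict (Ioi 0)) := by
    intro n
    exact IntegrableOn.congr_fun ((hG n).const_mul (B n * ω ^ n / n.factorial))
      (hFeq n) measurableSet_Ioi
  have hFnormeq : ∀ n : ℕ, EqOn
      (fun t : ℝ => ‖F n t‖)
      (fun t : ℝ => (B n * |ω| ^ n / n.factorial) *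
        (t ^ (lam + (n:ℝ) - 1) * Real.exp (-(z * t)))) (Ioi 0) := by
    intro n t ht
    have ht : (0:ℝ) < t := ht
    simp only [hF, Real.norm_eq_abs, abs_mul, abs_div, abs_pow,
      abs_of_pos (Real.exp_pos _), abs_of_pos (Real.rpow_pos_of_pos ht _),
      abs_of_nonneg (hB0 n), Nat.abs_cast, abs_of_pos ht, hsplit n ht, neg_mul]
    ring
  have hFnorm : ∀ n : ℕ,
      ∫ t in Ioi (0:ℝ), ‖F n t‖
        = (B n * |ω| ^ n / n.factorial) *
          ((1 / z) ^ (lam + (n:ℝ)) * Real.Gamma (lam + (n:ℝ))) := by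
    intro n
    rw [setIntegral_congr_fun measurableSet_Ioi (hFnormeq n), MeasureTheory.integral_const_mul, hGval n]
  have hFval : ∀ n : ℕ,
      ∫ t in Ioi (0:ℝ), F n t
        = (B n * ω ^ n / n.factorial) *
          ((1 / z) ^ (lam + (n:ℝ)) * Real.Gamma (lam + (n:ℝ))) := by
    intro n
    rw [← setIntegral_congr_fun measurableSet_Ioi (hFeq n), MeasureTheory.integral_const_mul, hGval n]
  have hsummand : ∀ n : ℕ,
      (B n * |ω| ^ n / n.factorial) * ((1 / z) ^ (lam + (n:ℝ)) * Real.Gamma (lam + (n:ℝ)))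
        = ((1 / z) ^ lam * Real.Gamma lam) *
          (B n * ((ascPochhammer ℝ n).eval lam * (|ω| / z) ^ n / n.factorial)) := by
    intro n
    rw [Real.rpow_add (by positivity : (0:ℝ) < 1 / z), Real.rpow_natCast,
      Gamma_lam_add lam hlam n, one_div, Real.inv_rpow hz.le, div_pow]
    have hz' : z ≠ 0 := hz.ne'
    have hfac : (n.factorial : ℝ) ≠ 0 := by positivity
    have hzl : z ^ lam ≠ 0 := by positivity
    field_simp
    have hzz : z ^ n * z⁻¹ ^ n = 1 := by rw [← mul_pow, mul_inv_cancel₀ hz', one_pow]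
    linear_combination (B n * |ω| ^ n * (ascPochhammer ℝ n).eval lam) * hzz
  have hsum : Summable fun n : ℕ => ∫ t in Ioi (0:ℝ), ‖F n t‖ := by
    simp only [hFnorm, hsummand]
    apply Summable.mul_left
    apply Summable.of_nonneg_of_le
      (fun n => by
        have h1 : 0 < (ascPochhammer ℝ n).eval lam := ascPochhammer_pos n lam hlam
        have h2 : (0:ℝ) ≤ (|ω| / z) ^ n := by positivity
        have h3 : (0:ℝ) < (n.factorial : ℝ) := by positivity
        have := hB0 n
        positivity)
      (fun n => by
        have h1 : 0 < (ascPochhammer ℝ n).eval lam := ascPochhammer_pos n lam hlam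
        have h2 : (0:ℝ) ≤ (|ω| / z) ^ n := by positivity
        have h3 : (0:ℝ) < (n.factorial : ℝ) := by positivity
        calc B n * ((ascPochhammer ℝ n).eval lam * (|ω| / z) ^ n / n.factorial)
            ≤ 1 * ((ascPochhammer ℝ n).eval lam * (|ω| / z) ^ n / n.factorial) := by
              apply mul_le_mul_of_nonneg_right (hB1 n) (by positivity)
          _ = (ascPochhammer ℝ n).eval lam * (|ω| / z) ^ n / n.factorial := one_mul _)
      (poch_summable lam hlam (by positivity) hr)
  have hswap := integral_tsum_of_summable_integral_norm hFint hsum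
  have hker : ∀ t : ℝ,
      Real.exp (-z * t) * t ^ (lam - 1) * pqKummer b c (ω * t) p q = ∑' n, F n t := by
    intro t
    unfold pqKummer
    exact (tsum_mul_left (a := Real.exp (-z * t) * t ^ (lam - 1))).symm
  calc pqGauss lam b c (ω / z) p q
      = ∑' n : ℕ, z ^ lam / Real.Gamma lam *
          ((B n * ω ^ n / n.factorial) *
            ((1 / z) ^ (lam + (n:ℝ)) * Real.Gamma (lam + (n:ℝ)))) := by
        unfold pqGauss
        apply tsum_congr
        intro n
        simp only [hB]
        rw [Real.rpow_add (by positivity : (0:ℝ) < 1 / z), Real.rpow_natCast,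
          Gamma_lam_add lam hlam n, one_div, Real.inv_rpow hz.le, div_pow]
        have hz' : z ≠ 0 := hz.ne'
        have hfac : (n.factorial : ℝ) ≠ 0 := by positivity
        have hzl : z ^ lam ≠ 0 := by positivity
        have hΓ : Real.Gamma lam ≠ 0 := (Real.Gamma_pos_of_pos hlam).ne'
        field_simp
        have hzz : z ^ n * z⁻¹ ^ n = 1 := by rw [← mul_pow, mul_inv_cancel₀ hz', one_pow]
        linear_combination (-((ascPochhammer ℝ n).eval lam * pqBeta (b + n) (c - b) p q * ω ^ n)) * hzz
    _ = z ^ lam / Real.Gamma lam * ∑' n : ℕ, ∫ t in Ioi (0:ℝ), F n t := by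
        rw [tsum_mul_left]
        congr 1
        exact (tsum_congr fun n => (hFval n).symm)
    _ = z ^ lam / Real.Gamma lam *
          ∫ t in Set.Ioi (0:ℝ),
            Real.exp (-z * t) * t ^ (lam - 1) * pqKummer b c (ω * t) p q := by
        rw [hswap]
        congr 1
        exact setIntegral_congr_fun measurableSet_Ioi fun t _ => (hker t).symm
end
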